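/- If 0 < λ < ‖K̂‖_∞^{−1}, then every solution u ∈ X of the equation u = λΓ[u] is isolated: there exists ε > 0 such that no v ∈ X with v = λΓ[v] satisfies 0 < ‖v − u‖_{L²} < ε. -/

import Mathlib

open MeasureTheory Filter Topology Real intervalIntegral

/-- `Γ[u](θ) = (∫₀^{2π} e^{-u})⁻¹ ∫₀^{2π} K̂(θ - θ') e^{-u(θ')} dθ'`. -/
noncomputable def Gam (K u : ℝ → ℝ) (θ : ℝ) : ℝ :=
  (∫ t in (0:ℝ)..(2 * π), Real.exp (-(u t)))⁻¹ *
    ∫ t in (0:ℝ)..(2 * π), K (θ - t) * Real.exp (-(u t))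

/-- Membership in `X = {u ∈ L²([0,2π]) : u(θ) = u(θ+π) a.e., u(θ) = u(2π-θ) a.e.,
∫₀^{2π} u = 0}`, for a (2π-periodic) representative `u : ℝ → ℝ`. -/
def MemX (u : ℝ → ℝ) : Prop :=
  MemLp u 2 (volume.restrict (Set.Ioc (0:ℝ) (2 * π))) ∧
  (∀ᵐ θ : ℝ, u (θ + π) = u θ) ∧
  (∀ᵐ θ : ℝ, u (2 * π - θ) = u θ) ∧
  (∫ θ in (0:ℝ)..(2 * π), u θ) = 0

/-- `‖K̂‖_∞ = sup_{θ ∈ [0,2π]} |K̂(θ)|`. -/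
noncomputable def supNorm (K : ℝ → ℝ) : ℝ := ⨆ θ : Set.Icc (0:ℝ) (2 * π), |K θ|

/-- The mean `∫₀^{2π} f dμ_u` of `f` against the probability measure `μ_u` with
density `e^{-u}/∫₀^{2π} e^{-u}`. -/
noncomputable def mAvg (u f : ℝ → ℝ) : ℝ :=
  (∫ t in (0:ℝ)..(2 * π), Real.exp (-(u t)))⁻¹ *
    ∫ t in (0:ℝ)..(2 * π), f t * Real.exp (-(u t))

lemma K_le_supNorm {K : ℝ → ℝ} (hKc : Continuous K) (hKper : Function.Periodic K (2 * π))
    (x : ℝ) : |K x| ≤ supNorm K := by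
  obtain ⟨y, hy, hxy⟩ := hKper.exists_mem_Ico₀ Real.two_pi_pos x
  have hbdd : BddAbove (Set.range fun θ : Set.Icc (0:ℝ) (2 * π) => |K θ|) := by
    obtain ⟨C, hC⟩ := (isCompact_Icc (a := (0:ℝ)) (b := 2*π)).exists_bound_of_continuousOn
      (hKc.continuousOn)
    refine ⟨C, ?_⟩
    rintro z ⟨θ, rfl⟩
    simpa using hC θ θ.2
  have : |K y| ≤ supNorm K :=
    le_ciSup hbdd (⟨y, Set.mem_Icc_of_Ico hy⟩ : Set.Icc (0:ℝ) (2*π))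
  rwa [hxy]

lemma supNorm_nonneg (K : ℝ → ℝ) : 0 ≤ supNorm K :=
  Real.iSup_nonneg fun _ => abs_nonneg _

local notation "ν" => volume.restrict (Set.Ioc (0:ℝ) (2 * π))

lemma nu_univ : (volume.restrict (Set.Ioc (0:ℝ) (2 * π))) Set.univ = ENNReal.ofReal (2*π) := by
  rw [Measure.restrict_apply_univ, Real.volume_Ioc, sub_zero]

lemma nu_finite : IsFiniteMeasure (volume.restrict (Set.Ioc (0:ℝ) (2 * π))) := by
  constructor; rw [nu_univ]; exact ENNReal.ofReal_lt_top

lemma integrable_bdd {f : ℝ → ℝ} {C : ℝ} (hm : AEStronglyMeasurable f ν)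
    (hb : ∀ᵐ t ∂ν, |f t| ≤ C) : Integrable f ν := by
  haveI := nu_finite
  exact ⟨hm, HasFiniteIntegral.of_bounded (C := C) hb⟩

lemma exp_integral_pos {w : ℝ → ℝ} (hInt : Integrable (fun t => Real.exp (-(w t))) ν) :
    0 < ∫ t, Real.exp (-(w t)) ∂ν := by
  rw [integral_pos_iff_support_of_nonneg_ae
    (Filter.Eventually.of_forall fun t => (Real.exp_pos _).le) hInt]
  have : (Function.support fun t => Real.exp (-(w t))) = Set.univ := by
    ext t; simp [Function.support, (Real.exp_pos (-(w t))).ne']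
  rw [this, nu_univ]
  positivity

lemma interval_eq_nu (f : ℝ → ℝ) :
    (∫ t in (0:ℝ)..(2*π), f t) = ∫ t, f t ∂ν := by
  rw [intervalIntegral.integral_of_le Real.two_pi_pos.le]

lemma gam_abs_le {K u : ℝ → ℝ} (hKc : Continuous K) (hKper : Function.Periodic K (2 * π))
    (hu : Measurable u)
    (huint : IntervalIntegrable (fun t => Real.exp (-(u t))) volume 0 (2 * π)) (θ : ℝ) :
    |Gam K u θ| ≤ supNorm K := by
  have hIoc : IntegrableOn (fun t => Real.exp (-(u t))) (Set.Ioc 0 (2*π)) volume := by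
    rw [intervalIntegrable_iff, Set.uIoc_of_le Real.two_pi_pos.le] at huint
    exact huint
  have hZnu : Integrable (fun t => Real.exp (-(u t))) ν := hIoc
  have hZpos : 0 < ∫ t, Real.exp (-(u t)) ∂ν := exp_integral_pos hZnu
  have hmeas : AEStronglyMeasurable (fun t => K (θ - t) * Real.exp (-(u t))) ν :=
    (((hKc.comp (continuous_const.sub continuous_id)).measurable).mul
      (hu.neg.exp)).aestronglyMeasurable
  have hInt : Integrable (fun t => K (θ - t) * Real.exp (-(u t))) ν := by
    refine Integrable.mono' (hZnu.const_mul (supNorm K)) hmeas ?_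
    refine Filter.Eventually.of_forall fun t => ?_
    rw [Real.norm_eq_abs, abs_mul, abs_of_pos (Real.exp_pos _)]
    exact mul_le_mul_of_nonneg_right (K_le_supNorm hKc hKper _) (Real.exp_pos _).le
  have hA : |∫ t, K (θ - t) * Real.exp (-(u t)) ∂ν| ≤
      supNorm K * ∫ t, Real.exp (-(u t)) ∂ν := by
    rw [← MeasureTheory.integral_const_mul]
    calc |∫ t, K (θ - t) * Real.exp (-(u t)) ∂ν|
        ≤ ∫ t, |K (θ - t)| * Real.exp (-(u t)) ∂ν := by
          simpa [Real.norm_eq_abs, abs_mul, abs_of_pos (Real.exp_pos _)] using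
            MeasureTheory.norm_integral_le_integral_norm (μ := ν)
              (fun t => K (θ - t) * Real.exp (-(u t)))
      _ ≤ ∫ t, supNorm K * Real.exp (-(u t)) ∂ν := by
          refine integral_mono_ae ?_ (hZnu.const_mul _) ?_
          · have := hInt.abs
            simpa [abs_mul, abs_of_pos (Real.exp_pos _)] using this
          · refine Filter.Eventually.of_forall fun t => ?_
            dsimp only
            exact mul_le_mul_of_nonneg_right (K_le_supNorm hKc hKper _) (Real.exp_pos _).le
  unfold Gam
  rw [interval_eq_nu, interval_eq_nu, abs_mul, abs_inv, abs_of_pos hZpos]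
  rw [inv_mul_le_iff₀ hZpos]
  linarith [hA]

lemma hasDerivAt_weighted {u g G : ℝ → ℝ} (hu : Measurable u) (hg : Measurable g)
    (hG : Measurable G) {Cu Cg CG : ℝ}
    (hub : ∀ᵐ t ∂ν, |u t| ≤ Cu) (hgb : ∀ᵐ t ∂ν, |g t| ≤ Cg) (hGb : ∀ t, |G t| ≤ CG)
    (s₀ : ℝ) :
    HasDerivAt (fun s => ∫ t, G t * Real.exp (-(u t + s * g t)) ∂ν)
      (∫ t, G t * (Real.exp (-(u t + s₀ * g t)) * -g t) ∂ν) s₀ := by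
  haveI := nu_finite
  have hCG : 0 ≤ CG := (abs_nonneg _).trans (hGb 0)
  have hmeas : ∀ s : ℝ, AEStronglyMeasurable
      (fun t => G t * Real.exp (-(u t + s * g t))) ν := fun s =>
    (hG.mul ((hu.add ((hg.const_mul s))).neg.exp)).aestronglyMeasurable
  have hmeas' : AEStronglyMeasurable
      (fun t => G t * (Real.exp (-(u t + s₀ * g t)) * -g t)) ν :=
    (hG.mul (((hu.add ((hg.const_mul s₀))).neg.exp).mul (hg.neg))).aestronglyMeasurable
  have hF_int : Integrable (fun t => G t * Real.exp (-(u t + s₀ * g t))) ν := by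
    refine integrable_bdd (C := CG * Real.exp (Cu + (|s₀| + 1) * Cg)) (hmeas s₀) ?_
    filter_upwards [hub, hgb] with t h1 h2
    have hE : Real.exp (-(u t + s₀ * g t)) ≤ Real.exp (Cu + (|s₀| + 1) * Cg) := by
      apply Real.exp_le_exp.2
      have hsg : |s₀ * g t| ≤ (|s₀| + 1) * Cg := by
        rw [abs_mul]
        refine mul_le_mul (by linarith [abs_nonneg s₀]) h2 (abs_nonneg _) ?_
        linarith [abs_nonneg s₀]
      have h1' := abs_le.1 h1
      have h2' := abs_le.1 hsg
      simp only [neg_add]; linarith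
    rw [abs_mul, abs_of_pos (Real.exp_pos _)]
    exact mul_le_mul (hGb t) hE (Real.exp_pos _).le hCG
  have h_bound : ∀ᵐ t ∂ν, ∀ s ∈ Metric.ball s₀ 1,
      ‖G t * (Real.exp (-(u t + s * g t)) * -g t)‖ ≤
        CG * (Cg * Real.exp (Cu + (|s₀| + 1) * Cg)) := by
    filter_upwards [hub, hgb] with t h1 h2
    intro s hs
    have hg0 : 0 ≤ Cg := (abs_nonneg _).trans h2
    have hs1 : |s - s₀| ≤ 1 := le_of_lt (by simpa [Real.dist_eq] using hs)
    have hsb : |s| ≤ |s₀| + 1 := by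
      have h3 : s₀ + (s - s₀) = s := by ring
      calc |s| = |s₀ + (s - s₀)| := by rw [h3]
        _ ≤ |s₀| + |s - s₀| := abs_add_le _ _
        _ ≤ |s₀| + 1 := by linarith
    have hE : Real.exp (-(u t + s * g t)) ≤ Real.exp (Cu + (|s₀| + 1) * Cg) := by
      apply Real.exp_le_exp.2
      have hsg : |s * g t| ≤ (|s₀| + 1) * Cg := by
        rw [abs_mul]
        exact mul_le_mul hsb h2 (abs_nonneg _) (by linarith [abs_nonneg s₀])
      have h1' := abs_le.1 h1
      have h2' := abs_le.1 hsg
      simp only [neg_add]; linarith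
    have e1 : ‖G t * (Real.exp (-(u t + s * g t)) * -g t)‖ =
        |G t| * (|g t| * Real.exp (-(u t + s * g t))) := by
      rw [Real.norm_eq_abs, abs_mul, abs_mul, abs_neg, abs_of_pos (Real.exp_pos _)]
      ring
    rw [e1]
    have inner : |g t| * Real.exp (-(u t + s * g t)) ≤
        Cg * Real.exp (Cu + (|s₀| + 1) * Cg) :=
      mul_le_mul h2 hE (Real.exp_pos _).le hg0
    exact mul_le_mul (hGb t) inner (mul_nonneg (abs_nonneg _) (Real.exp_pos _).le) hCG
  have h_diff : ∀ᵐ t ∂ν, ∀ s ∈ Metric.ball s₀ 1,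
      HasDerivAt (fun s => G t * Real.exp (-(u t + s * g t)))
        (G t * (Real.exp (-(u t + s * g t)) * -g t)) s := by
    refine Filter.Eventually.of_forall fun t s _ => ?_
    have h1 : HasDerivAt (fun s : ℝ => u t + s * g t) (g t) s :=
      (hasDerivAt_mul_const (g t)).const_add (u t)
    exact (h1.neg.exp).const_mul (G t)
  exact (_root_.hasDerivAt_integral_of_dominated_loc_of_deriv_le (μ := ν)
    (F := fun s t => G t * Real.exp (-(u t + s * g t)))
    (F' := fun s t => G t * (Real.exp (-(u t + s * g t)) * -g t))
    (bound := fun _ => CG * (Cg * Real.exp (Cu + (|s₀| + 1) * Cg)))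
    (Metric.ball_mem_nhds s₀ one_pos) (Filter.Eventually.of_forall fun s => hmeas s) hF_int hmeas' h_bound
    (integrable_const _) h_diff).2

lemma cov_le {g h w : ℝ → ℝ} {I S Ch Cw : ℝ}
    (hg : Measurable g) (hh : Measurable h) (hw : Measurable w)
    (hgb : ∀ᵐ t ∂ν, I ≤ g t ∧ g t ≤ S)
    (hhb : ∀ t, |h t| ≤ Ch)
    (hwb : ∀ᵐ t ∂ν, |w t| ≤ Cw) :
    |(∫ t, h t * (g t * Real.exp (-(w t))) ∂ν) * (∫ t, Real.exp (-(w t)) ∂ν) -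
        (∫ t, h t * Real.exp (-(w t)) ∂ν) * (∫ t, g t * Real.exp (-(w t)) ∂ν)| ≤
      Ch * ((S - I)/2) * (∫ t, Real.exp (-(w t)) ∂ν)^2 := by
  haveI := nu_finite
  set ρ : ℝ → ℝ := fun t => Real.exp (-(w t)) with hρ
  have hρm : Measurable ρ := hw.neg.exp
  have hρpos : ∀ t, 0 < ρ t := fun t => Real.exp_pos _
  have hρb : ∀ᵐ t ∂ν, |ρ t| ≤ Real.exp Cw := by
    filter_upwards [hwb] with t h1
    rw [abs_of_pos (hρpos t)]
    exact Real.exp_le_exp.2 (by linarith [(abs_le.1 h1).1])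
  have hCh : 0 ≤ Ch := (abs_nonneg _).trans (hhb 0)
  set Cg : ℝ := max |I| |S| with hCg
  have hgabs : ∀ᵐ t ∂ν, |g t| ≤ Cg := by
    filter_upwards [hgb] with t h1
    rw [abs_le]
    constructor
    · calc -Cg ≤ -|I| := by simp [hCg]
        _ ≤ I := neg_abs_le I
        _ ≤ g t := h1.1
    · calc g t ≤ S := h1.2
        _ ≤ |S| := le_abs_self S
        _ ≤ Cg := le_max_right _ _
  -- integrabilities
  have hρint : Integrable ρ ν := integrable_bdd hρm.aestronglyMeasurable hρb
  have hZpos : 0 < ∫ t, ρ t ∂ν := exp_integral_pos hρint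
  set Z : ℝ := ∫ t, ρ t ∂ν with hZ
  have hgρint : Integrable (fun t => g t * ρ t) ν := by
    refine integrable_bdd (C := Cg * Real.exp Cw) ((hg.mul hρm).aestronglyMeasurable) ?_
    filter_upwards [hgabs, hρb] with t h1 h2
    rw [abs_mul]
    exact mul_le_mul h1 h2 (abs_nonneg _) ((abs_nonneg _).trans h1)
  have hhρint : Integrable (fun t => h t * ρ t) ν := by
    refine integrable_bdd (C := Ch * Real.exp Cw) ((hh.mul hρm).aestronglyMeasurable) ?_
    filter_upwards [hρb] with t h2
    rw [abs_mul]
    exact mul_le_mul (hhb t) h2 (abs_nonneg _) hCh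
  have hhgρint : Integrable (fun t => h t * (g t * ρ t)) ν := by
    refine integrable_bdd (C := Ch * (Cg * Real.exp Cw))
      ((hh.mul (hg.mul hρm)).aestronglyMeasurable) ?_
    filter_upwards [hgabs, hρb] with t h1 h2
    rw [abs_mul, abs_mul]
    exact mul_le_mul (hhb t) (mul_le_mul h1 h2 (abs_nonneg _) ((abs_nonneg _).trans h1))
      (mul_nonneg (abs_nonneg _) (abs_nonneg _)) hCh
  set m : ℝ := (∫ t, g t * ρ t ∂ν) / Z with hm
  have hgρ_eq : (∫ t, g t * ρ t ∂ν) = m * Z := by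
    rw [hm, div_mul_cancel₀]
    exact hZpos.ne'
  have hmS : m ≤ S := by
    rw [hm, div_le_iff₀ hZpos]
    have : (∫ t, g t * ρ t ∂ν) ≤ ∫ t, S * ρ t ∂ν := by
      refine integral_mono_ae hgρint (hρint.const_mul S) ?_
      filter_upwards [hgb] with t h1
      exact mul_le_mul_of_nonneg_right h1.2 (hρpos t).le
    rwa [MeasureTheory.integral_const_mul] at this
  have hIm : I ≤ m := by
    rw [hm, le_div_iff₀ hZpos]
    have : (∫ t, I * ρ t ∂ν) ≤ ∫ t, g t * ρ t ∂ν := by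
      refine integral_mono_ae (hρint.const_mul I) hgρint ?_
      filter_upwards [hgb] with t h1
      exact mul_le_mul_of_nonneg_right h1.1 (hρpos t).le
    rwa [MeasureTheory.integral_const_mul] at this
  have hIS : I ≤ S := le_trans hIm hmS
  -- T bound
  have habsint : Integrable (fun t => |g t - m| * ρ t) ν := by
    refine integrable_bdd (C := (Cg + |m|) * Real.exp Cw)
      ((((hg.sub_const m).abs).mul hρm).aestronglyMeasurable) ?_
    filter_upwards [hgabs, hρb] with t h1 h2
    rw [abs_mul, abs_abs]
    refine mul_le_mul ?_ h2 (abs_nonneg _) (by positivity)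
    calc |g t - m| ≤ |g t| + |m| := abs_sub _ _
      _ ≤ Cg + |m| := by linarith
  have hmaxint : Integrable (fun t => max (g t - m) 0 * ρ t) ν := by
    refine integrable_bdd (C := (Cg + |m|) * Real.exp Cw)
      ((((hg.sub_const m).max measurable_const).mul hρm).aestronglyMeasurable) ?_
    filter_upwards [hgabs, hρb] with t h1 h2
    rw [abs_mul]
    refine mul_le_mul ?_ h2 (abs_nonneg _) (by positivity)
    rw [abs_of_nonneg (le_max_right _ _)]
    calc max (g t - m) 0 ≤ |g t - m| := max_le (le_abs_self _) (abs_nonneg _)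
      _ ≤ |g t| + |m| := abs_sub _ _
      _ ≤ Cg + |m| := by linarith
  have hcenter : (∫ t, (g t - m) * ρ t ∂ν) = 0 := by
    have : (fun t => (g t - m) * ρ t) = fun t => g t * ρ t - m * ρ t := by
      funext t; ring
    rw [this, integral_sub hgρint (hρint.const_mul m), MeasureTheory.integral_const_mul,
      hgρ_eq, ← hZ]
    ring
  have hT2 : (∫ t, |g t - m| * ρ t ∂ν) = 2 * ∫ t, max (g t - m) 0 * ρ t ∂ν := by
    have : (fun t => |g t - m| * ρ t) =
        fun t => 2 * (max (g t - m) 0 * ρ t) - (g t - m) * ρ t := by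
      funext t
      have : |g t - m| = 2 * max (g t - m) 0 - (g t - m) := by
        rcases le_or_gt (g t - m) 0 with hc | hc
        · rw [abs_of_nonpos hc, max_eq_right hc]; ring
        · rw [abs_of_pos hc, max_eq_left hc.le]; ring
      rw [this]; ring
    rw [this, integral_sub (hmaxint.const_mul 2) _, MeasureTheory.integral_const_mul, hcenter]
    · ring
    · have : (fun t => (g t - m) * ρ t) = fun t => g t * ρ t - m * ρ t := by
        funext t; ring
      rw [this]
      exact hgρint.sub (hρint.const_mul m)
  have hTle : (∫ t, |g t - m| * ρ t ∂ν) ≤ (S - I)/2 * Z := by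
    rcases eq_or_lt_of_le hIS with hISeq | hISlt
    · -- I = S : g = m a.e.
      have hmz : ∀ᵐ t ∂ν, |g t - m| * ρ t = (0:ℝ) := by
        filter_upwards [hgb] with t h1
        have hgt : g t = I := le_antisymm (hISeq ▸ h1.2) h1.1
        have hmI : m = I := le_antisymm (hISeq ▸ hmS) hIm
        rw [hgt, hmI]
        simp
      have hz : (∫ t, |g t - m| * ρ t ∂ν) = 0 := by
        rw [integral_congr_ae hmz]
        simp
      rw [hz]
      have : (S - I)/2 * Z = 0 := by rw [← hISeq]; ring
      rw [this]
    · have hmax_le : (∫ t, max (g t - m) 0 * ρ t ∂ν) * (S - I) ≤ (S - m) * (m - I) * Z := by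
        have hptwise : ∀ᵐ t ∂ν, max (g t - m) 0 * ρ t * (S - I) ≤
            (S - m) * ((g t - I) * ρ t) := by
          filter_upwards [hgb] with t h1
          have hkey : max (g t - m) 0 * (S - I) ≤ (S - m) * (g t - I) := by
            rcases le_or_gt (g t - m) 0 with hc | hc
            · rw [max_eq_right hc]
              have : 0 ≤ (S - m) * (g t - I) :=
                mul_nonneg (by linarith) (by linarith [h1.1])
              linarith
            · rw [max_eq_left hc.le]
              nlinarith [h1.1, h1.2]
          calc max (g t - m) 0 * ρ t * (S - I) = max (g t - m) 0 * (S - I) * ρ t := by ring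
            _ ≤ (S - m) * (g t - I) * ρ t :=
                mul_le_mul_of_nonneg_right hkey (hρpos t).le
            _ = (S - m) * ((g t - I) * ρ t) := by ring
        have hint2 : Integrable (fun t => (S - m) * ((g t - I) * ρ t)) ν := by
          have : (fun t => (S - m) * ((g t - I) * ρ t)) =
              fun t => (S - m) * (g t * ρ t) - ((S - m) * I) * ρ t := by
            funext t; ring
          rw [this]
          exact ((hgρint.const_mul _).sub (hρint.const_mul _))
        have := integral_mono_ae ((hmaxint.mul_const (S - I)).congr ?_) hint2 hptwise
        · rw [MeasureTheory.integral_const_mul] at this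
          have e2 : (∫ t, (g t - I) * ρ t ∂ν) = (m - I) * Z := by
            have e3 : (fun t => (g t - I) * ρ t) = fun t => g t * ρ t - I * ρ t := by
              funext t; ring
            rw [e3, integral_sub hgρint (hρint.const_mul I), MeasureTheory.integral_const_mul,
              hgρ_eq, ← hZ]
            ring
          rw [e2] at this
          calc (∫ t, max (g t - m) 0 * ρ t ∂ν) * (S - I)
              = ∫ t, (fun t => max (g t - m) 0 * ρ t) t * (S-I) ∂ν := by
                rw [MeasureTheory.integral_mul_const]
            _ ≤ (S - m) * ((m - I) * Z) := by
                refine le_trans (le_of_eq ?_) this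
                congr 1
            _ = (S - m) * (m - I) * Z := by ring
        · exact Filter.Eventually.of_forall fun t => rfl
      have hamgm : (S - m) * (m - I) ≤ ((S - I)/2)^2 := by
        nlinarith [sq_nonneg (S + I - 2*m)]
      have h2 : (∫ t, max (g t - m) 0 * ρ t ∂ν) * (S - I) ≤ ((S-I)/2)^2 * Z := by
        refine le_trans hmax_le ?_
        exact mul_le_mul_of_nonneg_right hamgm hZpos.le
      rw [hT2]
      have hpos : 0 < S - I := sub_pos.2 hISlt
      rw [← mul_le_mul_iff_of_pos_right hpos]
      nlinarith [h2]
  -- final assembly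
  have hcentint : Integrable (fun t => h t * ((g t - m) * ρ t)) ν := by
    have e1 : (fun t => h t * ((g t - m) * ρ t)) =
        fun t => h t * (g t * ρ t) - m * (h t * ρ t) := by
      funext t; ring
    rw [e1]
    exact hhgρint.sub (hhρint.const_mul m)
  have hkey : (∫ t, h t * (g t * ρ t) ∂ν) * Z -
      (∫ t, h t * ρ t ∂ν) * (∫ t, g t * ρ t ∂ν) =
      Z * ∫ t, h t * ((g t - m) * ρ t) ∂ν := by
    have e1 : (fun t => h t * ((g t - m) * ρ t)) =
        fun t => h t * (g t * ρ t) - m * (h t * ρ t) := by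
      funext t; ring
    rw [e1, integral_sub hhgρint (hhρint.const_mul m), MeasureTheory.integral_const_mul,
      hgρ_eq]
    ring
  rw [hkey, abs_mul, abs_of_pos hZpos]
  have habs2 : |∫ t, h t * ((g t - m) * ρ t) ∂ν| ≤ Ch * ((S - I)/2 * Z) := by
    calc |∫ t, h t * ((g t - m) * ρ t) ∂ν|
        ≤ ∫ t, |h t| * (|g t - m| * |ρ t|) ∂ν := by
          simpa [Real.norm_eq_abs] using
            MeasureTheory.norm_integral_le_integral_norm (μ := ν)
              (fun t => h t * ((g t - m) * ρ t))
      _ ≤ ∫ t, Ch * (|g t - m| * ρ t) ∂ν := by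
          refine integral_mono_ae ?_ (habsint.const_mul Ch) ?_
          · have := hcentint.abs
            have e2 : (fun t => |h t * ((g t - m) * ρ t)|) =
                fun t => |h t| * (|g t - m| * |ρ t|) := by
              funext t
              rw [abs_mul, abs_mul]
            rwa [e2] at this
          · refine Filter.Eventually.of_forall fun t => ?_
            dsimp only
            rw [abs_of_pos (hρpos t)]
            exact mul_le_mul_of_nonneg_right (hhb t)
              (mul_nonneg (abs_nonneg _) (hρpos t).le)
      _ = Ch * ∫ t, |g t - m| * ρ t ∂ν := MeasureTheory.integral_const_mul _ _
      _ ≤ Ch * ((S - I)/2 * Z) := mul_le_mul_of_nonneg_left hTle hCh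
  calc Z * |∫ t, h t * ((g t - m) * ρ t) ∂ν| ≤ Z * (Ch * ((S - I)/2 * Z)) :=
        mul_le_mul_of_nonneg_left habs2 hZpos.le
    _ = Ch * ((S - I)/2) * Z^2 := by ring

lemma solutions_unique {K : ℝ → ℝ} (hKc : Continuous K) (hKper : Function.Periodic K (2 * π))
    {lam : ℝ} (hlam0 : 0 < lam) (hcontr : lam * supNorm K < 1)
    {u v : ℝ → ℝ} (hu : Measurable u) (hv : Measurable v)
    (huint : IntervalIntegrable (fun t => Real.exp (-(u t))) volume 0 (2 * π))
    (hvint : IntervalIntegrable (fun t => Real.exp (-(v t))) volume 0 (2 * π))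
    (husol : u =ᵐ[volume] fun θ => lam * Gam K u θ)
    (hvsol : v =ᵐ[volume] fun θ => lam * Gam K v θ)
    (huzero : (∫ θ in (0:ℝ)..(2 * π), u θ) = 0)
    (hvzero : (∫ θ in (0:ℝ)..(2 * π), v θ) = 0)
    (huI : Integrable u ν) (hvI : Integrable v ν) :
    (fun θ => v θ - u θ) =ᵐ[volume] 0 := by
  haveI := nu_finite
  set sK : ℝ := supNorm K with hsK
  have hsK0 : 0 ≤ sK := supNorm_nonneg K
  set U : ℝ → ℝ := fun θ => lam * Gam K u θ with hU
  set V : ℝ → ℝ := fun θ => lam * Gam K v θ with hV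
  set F : ℝ → ℝ := fun θ => V θ - U θ with hF
  set g : ℝ → ℝ := fun t => v t - u t with hg
  have hgm : Measurable g := hv.sub hu
  set Cu : ℝ := lam * sK with hCu
  set CF : ℝ := 2 * (lam * sK) with hCF
  have hUb : ∀ θ, |U θ| ≤ Cu := by
    intro θ
    rw [hU]; dsimp only
    rw [abs_mul, abs_of_pos hlam0]
    exact mul_le_mul_of_nonneg_left (gam_abs_le hKc hKper hu huint θ) hlam0.le
  have hVb : ∀ θ, |V θ| ≤ Cu := by
    intro θ
    rw [hV]; dsimp only
    rw [abs_mul, abs_of_pos hlam0]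
    exact mul_le_mul_of_nonneg_left (gam_abs_le hKc hKper hv hvint θ) hlam0.le
  have hFb : ∀ θ, |F θ| ≤ CF := by
    intro θ
    rw [hF]; dsimp only
    calc |V θ - U θ| ≤ |V θ| + |U θ| := abs_sub _ _
      _ ≤ CF := by rw [hCF]; linarith [hUb θ, hVb θ]
  -- a.e. bounds
  have hub : ∀ᵐ t ∂ν, |u t| ≤ Cu := by
    refine ae_restrict_of_ae ?_
    filter_upwards [husol] with t ht
    rw [ht]; exact hUb t
  have hvb : ∀ᵐ t ∂ν, |v t| ≤ Cu := by
    refine ae_restrict_of_ae ?_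
    filter_upwards [hvsol] with t ht
    rw [ht]; exact hVb t
  have hgF : g =ᵐ[volume] F := by
    filter_upwards [husol, hvsol] with t h1 h2
    rw [hg, hF]; dsimp only; rw [h1, h2]
  have hgb : ∀ᵐ t ∂ν, |g t| ≤ CF := by
    refine ae_restrict_of_ae ?_
    filter_upwards [hgF] with t ht
    rw [ht]; exact hFb t
  -- sup and inf of F
  have hbddA : BddAbove (Set.range F) := ⟨CF, by rintro x ⟨θ, rfl⟩; exact (abs_le.1 (hFb θ)).2⟩
  have hbddB : BddBelow (Set.range F) := ⟨-CF, by rintro x ⟨θ, rfl⟩; exact (abs_le.1 (hFb θ)).1⟩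
  have hne : (Set.range F).Nonempty := ⟨F 0, Set.mem_range_self 0⟩
  set S : ℝ := sSup (Set.range F) with hS
  set I : ℝ := sInf (Set.range F) with hI
  have hFS : ∀ θ, F θ ≤ S := fun θ => le_csSup hbddA (Set.mem_range_self θ)
  have hIF : ∀ θ, I ≤ F θ := fun θ => csInf_le hbddB (Set.mem_range_self θ)
  have hIS : I ≤ S := le_trans (hIF 0) (hFS 0)
  have hgIS : ∀ᵐ t ∂ν, I ≤ g t ∧ g t ≤ S := by
    refine ae_restrict_of_ae ?_
    filter_upwards [hgF] with t ht
    rw [ht]; exact ⟨hIF t, hFS t⟩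
  -- integrability of exp weights for each s
  have hwm : ∀ s : ℝ, Measurable fun t => u t + s * g t := fun s =>
    hu.add (hgm.const_mul s)
  have hwb : ∀ s : ℝ, ∀ᵐ t ∂ν, |u t + s * g t| ≤ Cu + |s| * CF := by
    intro s
    filter_upwards [hub, hgb] with t h1 h2
    calc |u t + s * g t| ≤ |u t| + |s * g t| := abs_add_le _ _
      _ ≤ Cu + |s| * CF := by
          rw [abs_mul]
          exact add_le_add h1 (mul_le_mul_of_nonneg_left h2 (abs_nonneg s))
  have hden_int : ∀ s : ℝ, Integrable (fun t => Real.exp (-(u t + s * g t))) ν := by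
    intro s
    refine integrable_bdd (C := Real.exp (Cu + |s| * CF))
      ((hwm s).neg.exp.aestronglyMeasurable) ?_
    filter_upwards [hwb s] with t h1
    rw [abs_of_pos (Real.exp_pos _)]
    exact Real.exp_le_exp.2 (by linarith [(abs_le.1 h1).1])
  have hden_pos : ∀ s : ℝ, 0 < ∫ t, Real.exp (-(u t + s * g t)) ∂ν := fun s =>
    exp_integral_pos (hden_int s)
  -- key oscillation bound
  have hosc : S - I ≤ lam * sK * (S - I) := by
    refine le_of_forall_pos_le_add fun ε hε => ?_
    obtain ⟨y0, hy0mem, hy0⟩ := exists_lt_of_lt_csSup hne (show S - ε/2 < S by linarith)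
    obtain ⟨θ₀, rfl⟩ := hy0mem
    obtain ⟨y1, hy1mem, hy1⟩ := exists_lt_of_csInf_lt hne (show I < I + ε/2 by linarith)
    obtain ⟨θ₁, rfl⟩ := hy1mem
    set h : ℝ → ℝ := fun t => K (θ₀ - t) - K (θ₁ - t) with hh
    have hhm : Measurable h :=
      ((hKc.comp (continuous_const.sub continuous_id)).sub
        (hKc.comp (continuous_const.sub continuous_id))).measurable
    have hhb : ∀ t, |h t| ≤ 2 * sK := by
      intro t
      calc |h t| ≤ |K (θ₀ - t)| + |K (θ₁ - t)| := abs_sub _ _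
        _ ≤ 2 * sK := by
            linarith [K_le_supNorm hKc hKper (θ₀ - t), K_le_supNorm hKc hKper (θ₁ - t)]
    set num : ℝ → ℝ := fun s => ∫ t, h t * Real.exp (-(u t + s * g t)) ∂ν with hnum
    set den : ℝ → ℝ := fun s => ∫ t, Real.exp (-(u t + s * g t)) ∂ν with hden
    set φ : ℝ → ℝ := fun s => num s / den s with hφ
    -- derivatives
    have hnum_deriv : ∀ s : ℝ, HasDerivAt num
        (∫ t, h t * (Real.exp (-(u t + s * g t)) * -g t) ∂ν) s := fun s =>
      hasDerivAt_weighted hu hgm hhm hub hgb hhb s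
    have hden_deriv : ∀ s : ℝ, HasDerivAt den
        (∫ t, Real.exp (-(u t + s * g t)) * -g t ∂ν) s := by
      intro s
      have := hasDerivAt_weighted hu hgm measurable_const hub hgb
        (G := fun _ => (1:ℝ)) (CG := 1) (fun t => by norm_num) s
      simpa only [one_mul] using this
    set φ' : ℝ → ℝ := fun s =>
      ((∫ t, h t * (Real.exp (-(u t + s * g t)) * -g t) ∂ν) * den s -
        num s * ∫ t, Real.exp (-(u t + s * g t)) * -g t ∂ν) / (den s)^2 with hφ'
    have hφderiv : ∀ s : ℝ, HasDerivAt φ (φ' s) s := fun s =>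
      (hnum_deriv s).div (hden_deriv s) (hden_pos s).ne'
    obtain ⟨c, _, hslope⟩ := exists_hasDerivAt_eq_slope φ φ' one_pos
      (fun x _ => (hφderiv x).continuousAt.continuousWithinAt)
      (fun x _ => hφderiv x)
    have hslope' : φ 1 - φ 0 = φ' c := by
      rw [hslope]; norm_num
    -- covariance bound at c
    have hcov := cov_le (I := I) (S := S) (Ch := 2 * sK) (Cw := Cu + |c| * CF)
      hgm hhm (hwm c) hgIS hhb (hwb c)
    have hφ'bound : |φ' c| ≤ sK * (S - I) := by
      have e1 : (∫ t, h t * (Real.exp (-(u t + c * g t)) * -g t) ∂ν) =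
          -∫ t, h t * (g t * Real.exp (-(u t + c * g t))) ∂ν := by
        rw [← MeasureTheory.integral_neg]
        congr 1; funext t; ring
      have e2 : (∫ t, Real.exp (-(u t + c * g t)) * -g t ∂ν) =
          -∫ t, g t * Real.exp (-(u t + c * g t)) ∂ν := by
        rw [← MeasureTheory.integral_neg]
        congr 1; funext t; ring
      have hdc : 0 < den c := by rw [hden]; exact hden_pos c
      have hdc2 : 0 < (den c)^2 := pow_pos hdc 2
      rw [hφ']; dsimp only
      rw [e1, e2]
      rw [abs_div]
      rw [div_le_iff₀ (abs_pos.2 hdc2.ne')]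
      have e3 : |(-∫ t, h t * (g t * Real.exp (-(u t + c * g t))) ∂ν) * den c -
          num c * -∫ t, g t * Real.exp (-(u t + c * g t)) ∂ν| =
          |(∫ t, h t * (g t * Real.exp (-(u t + c * g t))) ∂ν) * den c -
          num c * ∫ t, g t * Real.exp (-(u t + c * g t)) ∂ν| := by
        rw [← abs_neg]; congr 1; ring
      rw [e3]
      have e4 : |(den c)^2| = (den c)^2 := abs_of_pos hdc2
      rw [e4]
      calc |(∫ t, h t * (g t * Real.exp (-(u t + c * g t))) ∂ν) * den c -
          num c * ∫ t, g t * Real.exp (-(u t + c * g t)) ∂ν| ≤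
          (2 * sK) * ((S - I)/2) * (den c)^2 := hcov
        _ = sK * (S - I) * (den c)^2 := by ring
    -- ends of the interpolation
    have hw1 : (fun t => Real.exp (-(u t + 1 * g t))) = fun t => Real.exp (-(v t)) := by
      funext t; rw [hg]; dsimp only; congr 1; ring
    have hw0 : (fun t => Real.exp (-(u t + 0 * g t))) = fun t => Real.exp (-(u t)) := by
      funext t; congr 1; ring
    have hw1h : (fun t => h t * Real.exp (-(u t + 1 * g t))) =
        fun t => h t * Real.exp (-(v t)) := by
      funext t; rw [hg]; dsimp only; congr 2; ring
    have hw0h : (fun t => h t * Real.exp (-(u t + 0 * g t))) =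
        fun t => h t * Real.exp (-(u t)) := by
      funext t; congr 2; ring
    -- identify F θ₀ - F θ₁ with lam * (φ 1 - φ 0)
    have hKint : ∀ (w : ℝ → ℝ), Measurable w →
        Integrable (fun t => Real.exp (-(w t))) ν → ∀ θ,
        Integrable (fun t => K (θ - t) * Real.exp (-(w t))) ν := by
      intro w hwm' hwint θ
      refine Integrable.mono' (hwint.const_mul sK)
        (((hKc.comp (continuous_const.sub continuous_id)).measurable.mul
          (hwm'.neg.exp)).aestronglyMeasurable) ?_
      refine Filter.Eventually.of_forall fun t => ?_
      rw [Real.norm_eq_abs, abs_mul, abs_of_pos (Real.exp_pos _)]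
      exact mul_le_mul_of_nonneg_right (K_le_supNorm hKc hKper _) (Real.exp_pos _).le
    have hvνint : Integrable (fun t => Real.exp (-(v t))) ν := by
      rw [intervalIntegrable_iff, Set.uIoc_of_le Real.two_pi_pos.le] at hvint
      exact hvint
    have huνint : Integrable (fun t => Real.exp (-(u t))) ν := by
      rw [intervalIntegrable_iff, Set.uIoc_of_le Real.two_pi_pos.le] at huint
      exact huint
    have hgam : ∀ (w : ℝ → ℝ), Measurable w →
        Integrable (fun t => Real.exp (-(w t))) ν → ∀ θ θ',
        Gam K w θ - Gam K w θ' = (∫ t, (K (θ - t) - K (θ' - t)) * Real.exp (-(w t)) ∂ν) /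
          (∫ t, Real.exp (-(w t)) ∂ν) := by
      intro w hwm' hwint θ θ'
      unfold Gam
      rw [interval_eq_nu, interval_eq_nu, interval_eq_nu]
      rw [div_eq_inv_mul]
      have : (fun t => (K (θ - t) - K (θ' - t)) * Real.exp (-(w t))) =
          fun t => K (θ - t) * Real.exp (-(w t)) - K (θ' - t) * Real.exp (-(w t)) := by
        funext t; ring
      rw [this, integral_sub (hKint w hwm' hwint θ) (hKint w hwm' hwint θ'), mul_sub]
    have hFdiff : F θ₀ - F θ₁ = lam * (φ 1 - φ 0) := by
      rw [hF, hU, hV]; dsimp only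
      have e5 : lam * Gam K v θ₀ - lam * Gam K u θ₀ - (lam * Gam K v θ₁ - lam * Gam K u θ₁)
          = lam * ((Gam K v θ₀ - Gam K v θ₁) - (Gam K u θ₀ - Gam K u θ₁)) := by ring
      rw [e5]
      congr 1
      rw [hgam v hv hvνint θ₀ θ₁, hgam u hu huνint θ₀ θ₁]
      rw [hφ]; dsimp only
      rw [hnum, hden]; dsimp only
      rw [hw1, hw0, hw1h, hw0h]
    -- conclude
    have hstep : F θ₀ - F θ₁ ≤ lam * (sK * (S - I)) := by
      rw [hFdiff, hslope']
      nlinarith [le_abs_self (φ' c), hφ'bound, hlam0.le, abs_nonneg (φ' c)]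
    have ha1 : S < F θ₀ + ε/2 := by linarith [hy0]
    have ha2 : F θ₁ - ε/2 < I := by linarith [hy1]
    have h6 : S - I < F θ₀ - F θ₁ + ε := by
      calc S - I < (F θ₀ + ε/2) - I := sub_lt_sub_right ha1 I
        _ ≤ (F θ₀ + ε/2) - (F θ₁ - ε/2) := sub_le_sub_left ha2.le _
        _ = F θ₀ - F θ₁ + ε := by ring
    linarith [hstep, h6]
  -- S = I = 0, F ≡ 0
  have hSI : S = I := by nlinarith [hosc, hIS]
  have hFS0 : ∀ θ, F θ = S := fun θ => le_antisymm (hFS θ) (hSI ▸ hIF θ)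
  have hintg : (∫ t, g t ∂ν) = 0 := by
    rw [hg]
    rw [integral_sub hvI huI]
    rw [← interval_eq_nu u, ← interval_eq_nu v, huzero, hvzero]
    ring
  have hintF : (∫ t, g t ∂ν) = S * (2 * π) := by
    rw [integral_congr_ae (ae_restrict_of_ae hgF)]
    have : (fun θ => F θ) = fun _ => S := funext hFS0
    rw [this, MeasureTheory.integral_const, measureReal_def, nu_univ,
      ENNReal.toReal_ofReal Real.two_pi_pos.le]
    rw [smul_eq_mul]; ring
  have hSzero : S = 0 := by
    have hi2 : S * (2 * π) = 0 := by rw [← hintF, hintg]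
    rcases mul_eq_zero.1 hi2 with h | h
    · exact h
    · exact absurd h (ne_of_gt Real.two_pi_pos)
  filter_upwards [hgF] with t ht
  rw [ht, hFS0 t, hSzero]
  rfl

/-- If `0 < λ < ‖K̂‖_∞⁻¹`, every solution `u ∈ X` of `u = λΓ[u]` is isolated in `L²`. -/
theorem solutions_isolated (K : ℝ → ℝ) (hKper : Function.Periodic K (2 * π))
    (hKlip : ∃ C : NNReal, LipschitzWith C K)
    (lam : ℝ) (hlam0 : 0 < lam) (hlam : lam < (supNorm K)⁻¹)
    (u : ℝ → ℝ) (hu : Measurable u) (huper : Function.Periodic u (2 * π))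
    (huX : MemX u)
    (huint : IntervalIntegrable (fun t => Real.exp (-(u t))) volume 0 (2 * π))
    (husol : u =ᵐ[volume] fun θ => lam * Gam K u θ) :
    ∃ ε > 0, ∀ v : ℝ → ℝ, Measurable v → Function.Periodic v (2 * π) → MemX v →
      IntervalIntegrable (fun t => Real.exp (-(v t))) volume 0 (2 * π) →
      (v =ᵐ[volume] fun θ => lam * Gam K v θ) →
      ¬ (0 < (eLpNorm (fun θ => v θ - u θ) 2
                (volume.restrict (Set.Ioc (0:ℝ) (2 * π)))).toReal ∧
          (eLpNorm (fun θ => v θ - u θ) 2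
                (volume.restrict (Set.Ioc (0:ℝ) (2 * π)))).toReal < ε) := by
  haveI := nu_finite
  obtain ⟨C, hC⟩ := hKlip
  have hKc : Continuous K := hC.continuous
  have hsK0 : 0 ≤ supNorm K := supNorm_nonneg K
  have hsKpos : 0 < supNorm K := by
    rcases eq_or_lt_of_le hsK0 with h | h
    · exfalso
      rw [← h] at hlam
      simp at hlam
      linarith
    · exact h
  have hcontr : lam * supNorm K < 1 := by
    rw [inv_eq_one_div] at hlam
    rw [lt_div_iff₀ hsKpos] at hlam
    exact hlam
  refine ⟨1, one_pos, fun v hv hvper hvX hvint hvsol => ?_⟩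
  rintro ⟨hpos, -⟩
  have huI : Integrable u ν := huX.1.integrable (by norm_num)
  have hvI : Integrable v ν := hvX.1.integrable (by norm_num)
  have hae : (fun θ => v θ - u θ) =ᵐ[volume] 0 :=
    solutions_unique hKc hKper hlam0 hcontr hu hv huint hvint husol hvsol
      huX.2.2.2 hvX.2.2.2 huI hvI
  have h0 : eLpNorm (fun θ => v θ - u θ) 2 ν = 0 := by
    rw [eLpNorm_congr_ae (ae_restrict_of_ae hae)]
    exact eLpNorm_zero
  rw [h0] at hpos
  simp at hpos
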